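/- There exists an infinite strictly decreasing sequence of terms under the cumulativity relation of ECC; that is, there are terms A_0 ≻ A_1 ≻ A_2 ≻ … where ≻ is the strict cumulativity order. -/

import Mathlib

namespace ECC

/-- Terms of Luo's Extended Calculus of Constructions, in de Bruijn representation. -/
inductive Term : Type
  | var   : ℕ → Term
  | prop  : Term
  | type  : ℕ → Term
  | pi    : Term → Term → Term
  | sigma : Term → Term → Term
  | lam   : Term → Term → Term
  | app   : Term → Term → Term
  | pair  : Term → Term → Term → Term   -- ⟨M, N⟩_B with type annotation B
  | proj1 : Term → Term
  | proj2 : Term → Term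
deriving DecidableEq

/-- Lift (shift by `d`) all de Bruijn indices ≥ `k`. -/
def lift (d : ℕ) : ℕ → Term → Term
  | k, .var n       => if n < k then .var n else .var (n + d)
  | _, .prop        => .prop
  | _, .type j      => .type j
  | k, .pi A B      => .pi (lift d k A) (lift d (k+1) B)
  | k, .sigma A B   => .sigma (lift d k A) (lift d (k+1) B)
  | k, .lam A M     => .lam (lift d k A) (lift d (k+1) M)
  | k, .app M N     => .app (lift d k M) (lift d k N)
  | k, .pair M N B  => .pair (lift d k M) (lift d k N) (lift d k B)
  | k, .proj1 M     => .proj1 (lift d k M)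
  | k, .proj2 M     => .proj2 (lift d k M)

/-- Capture-avoiding substitution `[N/x]A` of the term `N` for the variable `x` in `A`. -/
def subst (N : Term) : ℕ → Term → Term
  | k, .var n       => if n < k then .var n else if n = k then lift k 0 N else .var (n - 1)
  | _, .prop        => .prop
  | _, .type j      => .type j
  | k, .pi A B      => .pi (subst N k A) (subst N (k+1) B)
  | k, .sigma A B   => .sigma (subst N k A) (subst N (k+1) B)
  | k, .lam A M     => .lam (subst N k A) (subst N (k+1) M)
  | k, .app M M'    => .app (subst N k M) (subst N k M')
  | k, .pair M M' B => .pair (subst N k M) (subst N k M') (subst N k B)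
  | k, .proj1 M     => .proj1 (subst N k M)
  | k, .proj2 M     => .proj2 (subst N k M)

/-- `[N/x₀]B` : substitution for the outermost bound variable. -/
def subst0 (B N : Term) : Term := subst N 0 B

/-- One-step reduction (β together with the projection reductions, closed under all
term-formation congruences). -/
inductive Red : Term → Term → Prop
  | beta    : Red (.app (.lam A M) N) (subst0 M N)
  | pr1     : Red (.proj1 (.pair M N B)) M
  | pr2     : Red (.proj2 (.pair M N B)) N
  | piL     : Red A A' → Red (.pi A B) (.pi A' B)
  | piR     : Red B B' → Red (.pi A B) (.pi A B')
  | sigmaL  : Red A A' → Red (.sigma A B) (.sigma A' B)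
  | sigmaR  : Red B B' → Red (.sigma A B) (.sigma A B')
  | lamL    : Red A A' → Red (.lam A M) (.lam A' M)
  | lamR    : Red M M' → Red (.lam A M) (.lam A M')
  | appL    : Red M M' → Red (.app M N) (.app M' N)
  | appR    : Red N N' → Red (.app M N) (.app M N')
  | pairL   : Red M M' → Red (.pair M N B) (.pair M' N B)
  | pairR   : Red N N' → Red (.pair M N B) (.pair M N' B)
  | pairB   : Red B B' → Red (.pair M N B) (.pair M N B')
  | proj1C  : Red M M' → Red (.proj1 M) (.proj1 M')
  | proj2C  : Red M M' → Red (.proj2 M) (.proj2 M')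

/-- Conversion `≃` : the equivalence relation generated by reduction. -/
def Conv : Term → Term → Prop := Relation.EqvGen Red

/-- `A` has a normal form. -/
def HasNF (A : Term) : Prop :=
  ∃ B, Relation.ReflTransGen Red A B ∧ ∀ C, ¬ Red B C

/-- `𝒯` : the set of normalisable terms. -/
def Tset : Set Term := {A | HasNF A}

/-- Universes are `Prop` and the `Type_j`. -/
def IsUniv (T : Term) : Prop := T = .prop ∨ ∃ j, T = .type j

/-- The cumulativity relation `⪯` : the smallest preorder containing conversion,
the universe order, congruence for Π in the codomain, and congruence for Σ in both
components. -/
inductive Cum : Term → Term → Prop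
  | conv     : Conv A B → Cum A B
  | propType : Cum .prop (.type 0)
  | typeType : j ≤ k → Cum (.type j) (.type k)
  | pi       : Conv A A' → Cum B B' → Cum (.pi A B) (.pi A' B')
  | sigma    : Cum A A' → Cum B B' → Cum (.sigma A B) (.sigma A' B')
  | trans    : Cum A B → Cum B C → Cum A C

/-- The strict cumulativity relation `≺` : `A ⪯ B` and `A ≄ B`. -/
def SCum (A B : Term) : Prop := Cum A B ∧ ¬ Conv A B

/-- The stratified cumulativity relations `⪯ᵢ`. -/
inductive CumL : ℕ → Term → Term → Prop
  | conv     : Conv A B → CumL i A B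
  | propType : CumL i .prop (.type j)
  | typeType : j < k → CumL i (.type j) (.type k)
  | succ     : CumL i A B → CumL (i+1) A B
  | pi       : Conv M (.pi A B) → Conv N (.pi A' B') → Conv A A' → CumL i B B' →
               CumL (i+1) M N
  | sigma    : Conv M (.sigma A B) → Conv N (.sigma A' B') → CumL i A A' → CumL i B B' →
               CumL (i+1) M N

/-- Strict stratified cumulativity `≺ᵢ`. -/
def SCumL (i : ℕ) (A B : Term) : Prop := CumL i A B ∧ ¬ Conv A B

/-- Is the outermost symbol of a term Π or Σ? -/
def BinderHeaded : Term → Prop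
  | .pi _ _    => True
  | .sigma _ _ => True
  | _          => False

/-- The base stratum: normalisable terms not convertible to a binder-headed
normalisable term. -/
def Base : Set Term :=
  {T | HasNF T ∧ ¬ ∃ B, HasNF B ∧ BinderHeaded B ∧ Conv T B}

/-- The stratification `(Π_n, Σ_n)` of `𝒯`. -/
def Strata : ℕ → Set Term × Set Term
  | 0 => (Base, Base)
  | n+1 =>
    ({T | ∃ k l, ∃ _ : k + l = n, ∃ A B, HasNF (Term.pi A B) ∧ Conv T (Term.pi A B) ∧
        A ∈ (Strata k).1 ∪ (Strata k).2 ∧ B ∈ (Strata l).1 ∪ (Strata l).2},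
     {T | ∃ k l, ∃ _ : k + l = n, ∃ A B, HasNF (Term.sigma A B) ∧ Conv T (Term.sigma A B) ∧
        A ∈ (Strata k).1 ∪ (Strata k).2 ∧ B ∈ (Strata l).1 ∪ (Strata l).2})
termination_by n => n
decreasing_by all_goals omega

/-- The stratum `Π_n`. -/
def PiStr (n : ℕ) : Set Term := (Strata n).1

/-- The stratum `Σ_n`. -/
def SigStr (n : ℕ) : Set Term := (Strata n).2

/-- The specification of the rank function `φ : 𝒯 → ω`. -/
def PhiSpec (φ : Term → ℕ) : Prop :=
  (∀ M N, HasNF M → HasNF N → Conv M N → φ M = φ N) ∧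
  (∀ T, HasNF T → Conv T .prop → φ T = 2) ∧
  (∀ T j, HasNF T → Conv T (.type j) → φ T = 3 + j) ∧
  (∀ T, T ∈ PiStr 0 → ¬ Conv T .prop → (∀ j, ¬ Conv T (.type j)) → φ T = 1) ∧
  (∀ T A B, HasNF T → (Conv T (.pi A B) ∨ Conv T (.sigma A B)) → φ T = φ A * φ B) ∧
  (∀ T, HasNF T → 0 < φ T)

mutual
/-- Valid contexts of ECC (de Bruijn: the head of the list is the most recent entry). -/
inductive Valid : List Term → Prop
  | nil  : Valid []
  | cons : Typing Γ A (.type j) → Valid (A :: Γ)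

/-- The typing judgement `Γ ⊢ M : A` of ECC. -/
inductive Typing : List Term → Term → Term → Prop
  | prop  : Valid Γ → Typing Γ .prop (.type 0)
  | type  : Valid Γ → Typing Γ (.type j) (.type (j+1))
  | var   : Valid Γ → Γ[n]? = some A → Typing Γ (.var n) (lift (n+1) 0 A)
  | pi1   : Typing Γ A (.type j) → Typing (A :: Γ) B .prop →
            Typing Γ (.pi A B) .prop
  | pi2   : Typing Γ A (.type j) → Typing (A :: Γ) B (.type j) →
            Typing Γ (.pi A B) (.type j)
  | sig   : Typing Γ A (.type j) → Typing (A :: Γ) B (.type j) →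
            Typing Γ (.sigma A B) (.type j)
  | lam   : Typing (A :: Γ) M B → Typing Γ (.lam A M) (.pi A B)
  | app   : Typing Γ M (.pi A B) → Typing Γ N A → Typing Γ (.app M N) (subst0 B N)
  | pair  : Typing Γ M A → Typing Γ N (subst0 B M) → Typing (A :: Γ) B (.type j) →
            Typing Γ (.pair M N (.sigma A B)) (.sigma A B)
  | proj1 : Typing Γ M (.sigma A B) → Typing Γ (.proj1 M) A
  | proj2 : Typing Γ M (.sigma A B) → Typing Γ (.proj2 M) (subst0 B (.proj1 M))
  | cum   : Typing Γ M A → Typing Γ B (.type j) → Cum A B → Typing Γ M B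
end

/-- `Type_j` for `j ∈ ℤ`, with the convention `Type_{-1} = Prop`. -/
def TType (j : ℤ) : Term := if j < 0 then .prop else .type j.toNat

/-- The typing judgement of the restricted system `ECC⁻`: the rules
`(Π2)(Σ)(app)(pair)(⪯)` of ECC are replaced by `(Π2')(Σ')(app')(pair')` and `(≃)_ρ`. -/
inductive TypingM : List Term → Term → Term → Prop
  | prop  : Valid Γ → TypingM Γ .prop (.type 0)
  | type  : Valid Γ → TypingM Γ (.type j) (.type (j+1))
  | var   : Valid Γ → Γ[n]? = some A → TypingM Γ (.var n) (lift (n+1) 0 A)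
  | pi1   : TypingM Γ A (.type j) → TypingM (A :: Γ) B .prop →
            TypingM Γ (.pi A B) .prop
  | pi2'  : TypingM Γ A (TType j) → TypingM (A :: Γ) B (TType k) → 0 ≤ k →
            TypingM Γ (.pi A B) (TType (max (max j k) 0))
  | sig'  : TypingM Γ A (TType j) → TypingM (A :: Γ) B (TType k) →
            TypingM Γ (.sigma A B) (TType (max (max j k) 0))
  | lam   : TypingM (A :: Γ) M B → TypingM Γ (.lam A M) (.pi A B)
  | app'  : TypingM Γ M (.pi A B) → TypingM Γ N A' → Cum A' A →
            TypingM Γ (.app M N) (subst0 B N)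
  | pair' : TypingM Γ M A → TypingM Γ N C → TypingM (A' :: Γ) B' (.type j) →
            Cum A A' → Cum C (subst0 B' M) →
            TypingM Γ (.pair M N (.sigma A' B')) (.sigma A' B')
  | proj1 : TypingM Γ M (.sigma A B) → TypingM Γ (.proj1 M) A
  | proj2 : TypingM Γ M (.sigma A B) → TypingM Γ (.proj2 M) (subst0 B (.proj1 M))
  | conv  : TypingM Γ M A → Conv A A' → Typing Γ A' (.type j) → TypingM Γ M A'

end ECC


namespace ECC

theorem lift_zero (M : Term) : ∀ k, lift 0 k M = M := by
  induction M <;> intro k <;> simp [lift, *]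

theorem lift_lift_fuse (N : Term) : ∀ d i j b, b ≤ i → i ≤ b + j →
    lift d i (lift j b N) = lift (j + d) b N := by
  induction N <;> intro d i j b h1 h2
  case var n =>
    by_cases h : n < b
    · simp [lift, h]; omega
    · have : ¬ (n + j < i) := by omega
      simp [lift, h, this]; omega
  all_goals simp only [lift] <;> congr 1 <;> (apply_assumption <;> omega)

theorem lift_lift_comm (N : Term) : ∀ d j b k m, b ≤ k → m = k + j →
    lift d m (lift j b N) = lift j b (lift d k N) := by
  induction N <;> intro d j b k m h1 hm
  case var n =>
    rcases lt_or_ge n b with h | h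
    · have h2 : n < k := by omega
      simp [lift, h, h2]; omega
    · rcases lt_or_ge n k with h2 | h2
      · have : n + j < m := by omega
        have h3 : ¬ n < b := by omega
        simp [lift, h3, this, h2]
      · have h5 : ¬ (n + j < m) := by omega
        have h3 : ¬ n < b := by omega
        have h4 : ¬ (n + d < b) := by omega
        have h6 : ¬ n < k := by omega
        simp only [lift, if_neg h3, if_neg h5, if_neg h6, if_neg h4]
        congr 1 <;> omega
  all_goals simp only [lift] <;> congr 1 <;> (apply_assumption <;> omega)
theorem lift_subst_comm (M : Term) : ∀ (N : Term) d k j m m', m = k + j → m' = k + j + 1 →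
    lift d m (subst N j M) = subst (lift d k N) j (lift d m' M) := by
  induction M <;> intro N d k j m m' hm hm'
  case var n =>
    rcases lt_trichotomy n j with h | h | h
    · have h1 : n < m := by omega
      have h2 : n < m' := by omega
      simp [lift, subst, h, h1, h2]
    · subst h
      have h1 : n < m' := by omega
      have h2 : ¬ n < n := by omega
      simp only [subst, lift, if_neg h2, if_pos h1, ite_self, if_pos rfl, if_true]
      exact lift_lift_comm N d n 0 k m (by omega) hm
    · have h1 : ¬ n < j := by omega
      have h2 : n ≠ j := by omega
      rcases lt_or_ge n m' with h3 | h3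
      · have h4 : n - 1 < m := by omega
        simp [lift, subst, h1, h2, h3, h4]
      · have h4 : ¬ (n - 1 < m) := by omega
        have h5 : ¬ (n + d < j) := by omega
        have h6 : n + d ≠ j := by omega
        have h7 : ¬ (n < m') := by omega
        simp only [subst, lift, if_neg h1, if_neg h2, if_neg h4, if_neg h7, if_neg h5, if_neg h6]
        congr 1 <;> omega
  all_goals simp only [lift, subst] <;> congr 1 <;> (apply_assumption <;> omega)

theorem subst_lift_cancel (M : Term) : ∀ (X : Term) e i j, i ≤ j → j ≤ i + e →
    subst X j (lift (e+1) i M) = lift e i M := by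
  induction M <;> intro X e i j h1 h2
  case var n =>
    rcases lt_or_ge n i with h | h
    · have h3 : n < j := by omega
      simp [lift, subst, h, h3]
    · have h3 : ¬ (n + (e+1) < j) := by omega
      have h4 : n + (e+1) ≠ j := by omega
      have h5 : ¬ n < i := by omega
      simp only [lift, subst, if_neg h5, if_neg h3, if_neg h4]
      congr 1 <;> omega
  all_goals simp only [lift, subst] <;> congr 1 <;> (apply_assumption <;> omega)

theorem subst_lift_comm (M : Term) : ∀ (N : Term) d i j m, i ≤ j → m = j + d →
    subst N m (lift d i M) = lift d i (subst N j M) := by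
  induction M <;> intro N d i j m h1 hm
  case var n =>
    rcases lt_or_ge n i with h | h
    · have h2 : n < m := by omega
      have h3 : n < j := by omega
      simp [lift, subst, h, h2, h3]
    · rcases lt_trichotomy n j with h2 | h2 | h2
      · have h3 : n + d < m := by omega
        simp [lift, subst, h, h2, h3, show ¬ n < i by omega]
      · subst h2
        have h3 : ¬ (n + d < m) := by omega
        have h4 : n + d = m := by omega
        simp only [lift, subst, if_neg (show ¬ n < i by omega), if_neg h3, if_pos h4,
          if_neg (show ¬ n < n by omega), if_pos rfl, if_true]
        rw [hm]
        exact (lift_lift_fuse N d i n 0 (by omega) (by omega)).symm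
      · have h3 : ¬ (n + d < m) := by omega
        have h4 : n + d ≠ m := by omega
        have h5 : ¬ n < j := by omega
        have h6 : n ≠ j := by omega
        have h7 : ¬ (n - 1 < i) := by omega
        simp only [lift, subst, if_neg (show ¬ n < i by omega), if_neg h3, if_neg h4,
          if_neg h5, if_neg h6, if_neg h7]
        congr 1 <;> omega
  all_goals simp only [lift, subst] <;> congr 1 <;> (apply_assumption <;> omega)

theorem subst_subst (P : Term) : ∀ (N Q : Term) j k m m', m = j + k → m' = j + k + 1 →
    subst N m (subst Q j P) = subst (subst N k Q) j (subst N m' P) := by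
  induction P <;> intro N Q j k m m' hm hm'
  case var n =>
    rcases lt_trichotomy n j with h | h | h
    · simp [subst, h, show n < m by omega, show n < m' by omega]
    · subst h
      simp only [subst, if_neg (show ¬ n < n by omega), if_pos rfl,
        if_pos (show n < m' by omega), if_true]
      exact subst_lift_comm Q N n 0 k m (by omega) (by omega)
    · have h1 : ¬ n < j := by omega
      have h2 : n ≠ j := by omega
      rcases lt_trichotomy n m' with h3 | h3 | h3
      · have h4 : n - 1 < m := by omega
        simp [subst, h1, h2, h3, h4]
      · subst h3
        simp only [subst, if_neg h1, if_neg h2, if_neg (show ¬ n < n by omega), if_pos rfl,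
          if_neg (show ¬ n - 1 < m by omega), if_pos (show n - 1 = m by omega), if_true]
        rw [show n = (j + k) + 1 by omega,
          subst_lift_cancel N (subst N k Q) (j+k) 0 j (by omega) (by omega)]
        congr 1 <;> omega
      · have h4 : ¬ n - 1 < m := by omega
        have h5 : n - 1 ≠ m := by omega
        have h6 : ¬ n < m' := by omega
        have h7 : n ≠ m' := by omega
        have h8 : ¬ n - 1 < j := by omega
        have h9 : n - 1 ≠ j := by omega
        simp [subst, h1, h2, h4, h5, h6, h7, h8, h9]
  all_goals simp only [lift, subst] <;> congr 1 <;> (apply_assumption <;> omega)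
set_option linter.unusedTactic false
set_option linter.unreachableTactic false
set_option linter.unnecessarySeqFocus false

/-- Parallel reduction. -/
inductive Par : Term → Term → Prop
  | var   : Par (.var n) (.var n)
  | prop  : Par .prop .prop
  | type  : Par (.type j) (.type j)
  | pi    : Par A A' → Par B B' → Par (.pi A B) (.pi A' B')
  | sigma : Par A A' → Par B B' → Par (.sigma A B) (.sigma A' B')
  | lam   : Par A A' → Par M M' → Par (.lam A M) (.lam A' M')
  | app   : Par M M' → Par N N' → Par (.app M N) (.app M' N')
  | pair  : Par M M' → Par N N' → Par B B' → Par (.pair M N B) (.pair M' N' B')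
  | proj1 : Par M M' → Par (.proj1 M) (.proj1 M')
  | proj2 : Par M M' → Par (.proj2 M) (.proj2 M')
  | beta  : Par M M' → Par N N' → Par (.app (.lam A M) N) (subst0 M' N')
  | pr1   : Par M M' → Par (.proj1 (.pair M N B)) M'
  | pr2   : Par N N' → Par (.proj2 (.pair M N B)) N'

theorem Par.refl : ∀ M : Term, Par M M := by
  intro M; induction M <;> constructor <;> assumption

theorem Red.par {M N : Term} (h : Red M N) : Par M N := by
  induction h <;> first
    | exact Par.beta (Par.refl _) (Par.refl _)
    | exact Par.pr1 (Par.refl _)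
    | exact Par.pr2 (Par.refl _)
    | (constructor <;> first | assumption | exact Par.refl _)

theorem Par.lift {M M' : Term} (h : Par M M') : ∀ d k, Par (lift d k M) (lift d k M') := by
  induction h <;> intro d k
  case var n => by_cases h : n < k <;> simp [ECC.lift, h] <;> exact Par.var
  case beta M M' N N' A hM hN ihM ihN =>
    have : ECC.lift d k (subst0 M' N') = subst0 (ECC.lift d (k+1) M') (ECC.lift d k N') := by
      simpa [subst0] using lift_subst_comm M' N' d k 0 k (k+1) (by omega) (by omega)
    rw [this]
    exact Par.beta (ihM d (k+1)) (ihN d k)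
  all_goals simp only [ECC.lift] <;> constructor <;> apply_assumption

theorem Par.subst {M M' : Term} (h : Par M M') {N N' : Term} (hN : Par N N') :
    ∀ k, Par (subst N k M) (subst N' k M') := by
  induction h <;> intro k
  case var n =>
    rcases lt_trichotomy n k with h | h | h
    · simp [ECC.subst, h]; exact Par.var
    · subst h; simp [ECC.subst]; exact hN.lift _ _
    · simp [ECC.subst, show ¬ n < k by omega, show n ≠ k by omega]; exact Par.var
  case beta M M' P P' A hM hP ihM ihP =>
    have : ECC.subst N' k (subst0 M' P') =
        subst0 (ECC.subst N' (k+1) M') (ECC.subst N' k P') := by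
      simpa [subst0] using (subst_subst M' N' P' 0 k k (k+1) (by omega) (by omega))
    rw [this]
    exact Par.beta (ihM (k+1)) (ihP k)
  all_goals simp only [ECC.subst] <;> constructor <;> apply_assumption

/-- Complete development. -/
def cd : Term → Term
  | .app (.lam _ M) N    => subst0 (cd M) (cd N)
  | .proj1 (.pair M _ _) => cd M
  | .proj2 (.pair _ N _) => cd N
  | .var n       => .var n
  | .prop        => .prop
  | .type j      => .type j
  | .pi A B      => .pi (cd A) (cd B)
  | .sigma A B   => .sigma (cd A) (cd B)
  | .lam A M     => .lam (cd A) (cd M)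
  | .app M N     => .app (cd M) (cd N)
  | .pair M N B  => .pair (cd M) (cd N) (cd B)
  | .proj1 M     => .proj1 (cd M)
  | .proj2 M     => .proj2 (cd M)

theorem Par.cd_par {M N : Term} (h : Par M N) : Par N (cd M) := by
  induction h
  case var => exact Par.var
  case prop => exact Par.prop
  case type => exact Par.type
  case pi => exact Par.pi (by assumption) (by assumption)
  case sigma => exact Par.sigma (by assumption) (by assumption)
  case lam => exact Par.lam (by assumption) (by assumption)
  case pair => exact Par.pair (by assumption) (by assumption) (by assumption)
  case beta M M' P P' A hM hP ihM ihP =>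
    exact Par.subst ihM ihP 0
  case pr1 M M' P B hM ihM => exact ihM
  case pr2 P M M' B hM ihM => exact ihM
  case app M M' P P' hM hP ihM ihP =>
    cases M
    case lam A Q =>
      cases hM
      case lam A' Q' hA hQ =>
        have hQ' : Par Q' (cd Q) := by
          rw [show cd (Term.lam A Q) = Term.lam (cd A) (cd Q) from rfl] at ihM
          cases ihM; assumption
        exact Par.beta hQ' ihP
    all_goals exact Par.app ihM ihP
  case proj1 M M' hM ihM =>
    cases M
    case pair P Q B =>
      cases hM
      case pair P' Q' B' hP hQ hB =>
        have : Par P' (cd P) := by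
          rw [show cd (Term.pair P Q B) = Term.pair (cd P) (cd Q) (cd B) from rfl] at ihM
          cases ihM; assumption
        exact Par.pr1 this
    all_goals exact Par.proj1 ihM
  case proj2 M M' hM ihM =>
    cases M
    case pair P Q B =>
      cases hM
      case pair P' Q' B' hP hQ hB =>
        have : Par Q' (cd Q) := by
          rw [show cd (Term.pair P Q B) = Term.pair (cd P) (cd Q) (cd B) from rfl] at ihM
          cases ihM; assumption
        exact Par.pr2 this
    all_goals exact Par.proj2 ihM
/-- The self-application term `α = λy:Type₀. Σx:Type₀. y y`. -/
def alpha : Term := .lam (.type 0) (.sigma (.type 0) (.app (.var 1) (.var 1)))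

/-- `Ω = α α`, with `Ω ▷ Σx:Type₀. Ω`. -/
def Omega : Term := .app alpha alpha

theorem red_Omega : Red Omega (.sigma (.type 0) Omega) := by
  have h : Red Omega (subst0 (.sigma (.type 0) (.app (.var 1) (.var 1))) alpha) := Red.beta
  have e : subst0 (.sigma (.type 0) (.app (.var 1) (.var 1))) alpha
      = .sigma (.type 0) Omega := by decide
  rwa [e] at h

theorem par_alpha {X : Term} (h : Par alpha X) : X = alpha := by
  cases h with
  | lam hA hM =>
    cases hA
    cases hM with
    | sigma hA hB =>
      cases hA
      cases hB with
      | app h1 h2 => cases h1; cases h2; rfl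

theorem par_Omega {X : Term} (h : Par Omega X) :
    X = Omega ∨ X = .sigma (.type 0) Omega := by
  cases h with
  | app h1 h2 =>
    rw [par_alpha h1, par_alpha h2]; left; rfl
  | beta h1 h2 =>
    rw [par_alpha h2]
    cases h1 with
    | sigma hA hB =>
      cases hA
      cases hB with
      | app ha hb =>
        cases ha; cases hb
        right
        show subst0 (.sigma (.type 0) (.app (.var 1) (.var 1))) alpha = _
        decide

/-- `pw n T = (Σ Prop)ⁿ T`. -/
def pw : ℕ → Term → Term
  | 0, T => T
  | n+1, T => .sigma .prop (pw n T)

/-- The `(Σ Type₀)^k Ω` family. -/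
inductive Inner : Term → Prop
  | base : Inner Omega
  | step : Inner T → Inner (.sigma (.type 0) T)

/-- `W n T` iff `T = (Σ Prop)ⁿ ((Σ Type₀)^k Ω)` for some `k`. -/
inductive W : ℕ → Term → Prop
  | zero : Inner T → W 0 T
  | succ : W n T → W (n+1) (.sigma .prop T)

theorem Inner.par {T X : Term} (hT : Inner T) (h : Par T X) : Inner X := by
  induction hT generalizing X with
  | base =>
    rcases par_Omega h with rfl | rfl
    · exact Inner.base
    · exact Inner.step Inner.base
  | step hT ih =>
    cases h with
    | sigma hA hB => cases hA; exact Inner.step (ih hB)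

theorem W.par {n : ℕ} {T X : Term} (hT : W n T) (h : Par T X) : W n X := by
  induction hT generalizing X with
  | zero hI => exact W.zero (hI.par h)
  | succ hT ih =>
    cases h with
    | sigma hA hB => cases hA; exact W.succ (ih hB)

theorem W.rtg {n : ℕ} {T X : Term} (hT : W n T) (h : Relation.ReflTransGen Par T X) :
    W n X := by
  induction h with
  | refl => exact hT
  | tail _ hstep ih => exact ih.par hstep

theorem W.not_succ : ∀ n (T : Term), W n T → W (n+1) T → False := by
  intro n
  induction n with
  | zero =>
    intro T h h'
    cases h' with
    | succ h0 =>
      cases h with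
      | zero hI => cases hI
  | succ n ih =>
    intro T h h'
    cases h with
    | succ h1 =>
      cases h' with
      | succ h2 => exact ih _ h1 h2
theorem par_diamondish : ∀ a b c : Term, Par a b → Par a c →
    ∃ d, Relation.ReflGen Par b d ∧ Relation.ReflTransGen Par c d :=
  fun a _ _ hb hc =>
    ⟨cd a, Relation.ReflGen.single hb.cd_par, Relation.ReflTransGen.single hc.cd_par⟩

theorem conv_join {A B : Term} (h : Conv A B) :
    Relation.Join (Relation.ReflTransGen Par) A B := by
  have hequiv : Equivalence (Relation.Join (Relation.ReflTransGen Par)) :=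
    Relation.equivalence_join_reflTransGen par_diamondish
  refine hequiv.eqvGen_iff.mp ?_
  refine Relation.EqvGen.mono ?_ _ _ h
  intro a b hab
  exact ⟨b, Relation.ReflTransGen.single hab.par, Relation.ReflTransGen.refl⟩

theorem W_pw (n : ℕ) : W n (pw n Omega) := by
  induction n with
  | zero => exact W.zero Inner.base
  | succ n ih => exact W.succ ih

theorem not_conv_pw (n : ℕ) : ¬ Conv (pw (n+1) Omega) (pw n Omega) := by
  intro h
  obtain ⟨C, h1, h2⟩ := conv_join h
  exact W.not_succ n C ((W_pw n).rtg h2) (((W_pw (n+1)).rtg h1))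

theorem pw_sigma (n : ℕ) (T : Term) : pw n (.sigma .prop T) = pw (n+1) T := by
  induction n with
  | zero => rfl
  | succ n ih => simp only [pw, ih]

theorem cum_pw {X Y : Term} (h : Cum X Y) : ∀ n, Cum (pw n X) (pw n Y) := by
  intro n
  induction n with
  | zero => exact h
  | succ n ih => exact Cum.sigma (Cum.conv (Relation.EqvGen.refl _)) ih

theorem cum_sigma_Omega : Cum (.sigma .prop Omega) Omega := by
  refine Cum.trans (Cum.sigma Cum.propType (Cum.conv (Relation.EqvGen.refl _))) ?_
  exact Cum.conv (Relation.EqvGen.symm _ _ (Relation.EqvGen.rel _ _ red_Omega))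

end ECC

/-- There exists an infinite strictly decreasing sequence of terms under
the cumulativity relation of ECC: terms `A 0 ≻ A 1 ≻ A 2 ≻ …` where `≻` is the strict
cumulativity order. -/
theorem exists_infinite_descending_cumulativity_chain :
    ∃ A : ℕ → ECC.Term, ∀ n, ECC.SCum (A (n+1)) (A n) := by
  refine ⟨fun n => ECC.pw n ECC.Omega, fun n => ⟨?_, ECC.not_conv_pw n⟩⟩
  have := ECC.cum_pw ECC.cum_sigma_Omega n
  rwa [ECC.pw_sigma] at this
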